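/- Define a relation on F_k by u > v if and only if w(v^{-1}u) > 0, where w is the weight function on reduced words. Then > is a strict linear order on F_k invariant under left multiplication: for all f, g, h ∈ F_k, g > h implies fg > fh, and for all distinct g, h exactly one of g > h, h > g holds. -/

import Mathlib

/-- A letter of the alphabet `Σ_k^±`: `(i, true)` is the positive letter `s_{i+1}`,
`(i, false)` is the negative letter `S_{i+1} = s_{i+1}⁻¹`. -/
abbrev Letter (k : ℕ) := Fin k × Bool

/-- A word is reduced if no two adjacent letters cancel. -/
def Reduced {k : ℕ} (u : List (Letter k)) : Prop :=
  u.Chain' fun x y => y ≠ (x.1, !x.2)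

/-- Contribution of a length-2 factor `xy`:
`+1` if it has the form `s_j S_i` with `j > i`, `-1` if `S_j s_i` with `j > i`, else `0`. -/
def pairVal {k : ℕ} (x y : Letter k) : ℤ :=
  if x.2 = true ∧ y.2 = false ∧ y.1 < x.1 then 1
  else if x.2 = false ∧ y.2 = true ∧ y.1 < x.1 then -1
  else 0

/-- Sum of contributions of all length-2 factors of a word. -/
def pairSum {k : ℕ} : List (Letter k) → ℤ
  | x :: y :: t => pairVal x y + pairSum (y :: t)
  | _ => 0

/-- `+1/2`, `-1/2`, or `0` according to the last letter. -/
def lastSign {k : ℕ} (u : List (Letter k)) : ℚ :=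
  match u.getLast? with
  | none => 0
  | some x => if x.2 then 1/2 else -1/2

/-- The weight function `w` of Šunić's order. -/
def w {k : ℕ} (u : List (Letter k)) : ℚ := pairSum u + lastSign u

/-- The weight transported to the free group via reduced words. -/
def W {k : ℕ} (g : FreeGroup (Fin k)) : ℚ := w g.toWord

def eSign {k : ℕ} (x : Letter k) : ℚ := if x.2 then 1/2 else -1/2

lemma pv_inv {k : ℕ} (x y : Letter k) (h : y ≠ (x.1, !x.2)) :
    (pairVal x y : ℚ) + (pairVal (y.1, !y.2) (x.1, !x.2) : ℚ) = eSign x - eSign y := by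
  obtain ⟨i, a⟩ := x; obtain ⟨j, b⟩ := y
  simp only [pairVal, eSign, ne_eq, Prod.mk.injEq, not_and, Fin.lt_def] at *
  cases a <;> cases b <;> simp_all <;> split_ifs <;> (try simp_all) <;>
    first
    | (simp only [Fin.lt_def, Fin.le_def, ne_eq, Fin.ext_iff] at *; omega)
    | norm_num

lemma key3 {k : ℕ} (x y z : Letter k) (hxy : y ≠ (x.1, !x.2)) (hzy : z ≠ y)
    (hxz : z ≠ (x.1, !x.2)) :
    ((pairVal x y : ℚ) - eSign x) + ((pairVal (y.1, !y.2) z : ℚ) - eSign (y.1, !y.2))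
      - ((pairVal x z : ℚ) - eSign x) ≤ 1/2 := by
  obtain ⟨i, a⟩ := x; obtain ⟨j, b⟩ := y; obtain ⟨l, c⟩ := z
  simp only [pairVal, eSign, ne_eq, Prod.mk.injEq, not_and, Fin.lt_def] at *
  cases a <;> cases b <;> cases c <;> simp_all <;> split_ifs <;> (try simp_all) <;>
    first
    | (simp only [Fin.lt_def, Fin.le_def, ne_eq, Fin.ext_iff] at *; omega)
    | norm_num

lemma jle {k : ℕ} (x y : Letter k) : (pairVal x y : ℚ) - eSign x ≤ 1/2 := by
  obtain ⟨i, a⟩ := x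
  simp only [pairVal, eSign]
  cases a <;> split_ifs <;> (try simp_all) <;> norm_num

lemma jge {k : ℕ} (x y : Letter k) : -(1/2) ≤ (pairVal x y : ℚ) - eSign x := by
  obtain ⟨i, a⟩ := x
  simp only [pairVal, eSign]
  cases a <;> split_ifs <;> (try simp_all) <;> norm_num

lemma eSign_inv {k : ℕ} (x : Letter k) : eSign (x.1, !x.2) = - eSign x := by
  cases hx : x.2 <;> simp [eSign, hx] <;> norm_num

def pOpt {k : ℕ} : Option (Letter k) → Option (Letter k) → ℤ
  | some x, some y => pairVal x y
  | _, _ => 0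

def jOpt {k : ℕ} : Option (Letter k) → Option (Letter k) → ℚ
  | some x, some y => (pairVal x y : ℚ) - eSign x
  | _, _ => 0

@[simp] lemma pOpt_none_right {k : ℕ} (o : Option (Letter k)) : pOpt o none = 0 := by
  cases o <;> rfl
@[simp] lemma pOpt_none_left {k : ℕ} (o : Option (Letter k)) : pOpt none o = 0 := by
  cases o <;> rfl
@[simp] lemma jOpt_none_right {k : ℕ} (o : Option (Letter k)) : jOpt o none = 0 := by
  cases o <;> rfl
@[simp] lemma jOpt_none_left {k : ℕ} (o : Option (Letter k)) : jOpt none o = 0 := by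
  cases o <;> rfl

lemma jOpt_le {k : ℕ} (o₁ o₂ : Option (Letter k)) : jOpt o₁ o₂ ≤ 1/2 := by
  rcases o₁ with _|x <;> rcases o₂ with _|y <;> simp [jOpt] <;> try { have := jle x y; linarith }

lemma jOpt_ge {k : ℕ} (o₁ o₂ : Option (Letter k)) : -(1/2) ≤ jOpt o₁ o₂ := by
  rcases o₁ with _|x <;> rcases o₂ with _|y <;> simp [jOpt] <;> try { have := jge x y; linarith }

lemma pairSum_append {k : ℕ} : ∀ (A B : List (Letter k)),
    pairSum (A ++ B) = pairSum A + pairSum B + pOpt A.getLast? B.head?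
  | [], B => by simp [pairSum]
  | [x], B => by
    cases B with
    | nil => simp [pairSum]
    | cons y t => simp [pairSum, pOpt]; ring
  | x :: y :: t, B => by
    show pairVal x y + pairSum ((y :: t) ++ B) = _
    rw [pairSum_append (y :: t) B, List.getLast?_cons_cons]
    show _ = pairVal x y + pairSum (y :: t) + _ + _
    ring

lemma lastSign_eq_some {k : ℕ} {u : List (Letter k)} {x : Letter k}
    (h : u.getLast? = some x) : lastSign u = eSign x := by
  unfold lastSign eSign; rw [h]

lemma w_append {k : ℕ} (A B : List (Letter k)) :
    w (A ++ B) = w A + w B + jOpt A.getLast? B.head? := by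
  by_cases hB : B = []
  · subst hB; simp [w, pairSum, lastSign]
  · have h1 : lastSign (A ++ B) = lastSign B := by
      unfold lastSign; rw [List.getLast?_append_of_ne_nil A hB]
    unfold w
    rw [pairSum_append, h1]
    cases hA : A.getLast? with
    | none =>
      have : A = [] := by
        cases A with
        | nil => rfl
        | cons z t => simp [List.getLast?_eq_none_iff] at hA
      subst this
      simp [pairSum, lastSign]
    | some la =>
      rw [lastSign_eq_some hA]
      obtain ⟨y, t, rfl⟩ := List.exists_cons_of_ne_nil hB
      simp only [List.head?_cons, pOpt, jOpt]
      push_cast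
      ring

lemma w_singleton {k : ℕ} (x : Letter k) : w [x] = eSign x := by
  show ((0 : ℤ) : ℚ) + lastSign [x] = eSign x
  unfold lastSign eSign
  simp

lemma invRev_cons {k : ℕ} (x : Letter k) (u : List (Letter k)) :
    FreeGroup.invRev (x :: u) = FreeGroup.invRev u ++ [(x.1, !x.2)] := by
  simp [FreeGroup.invRev]

lemma getLast?_invRev {k : ℕ} (u : List (Letter k)) :
    (FreeGroup.invRev u).getLast? = u.head?.map (fun x => (x.1, !x.2)) := by
  unfold FreeGroup.invRev
  rw [List.getLast?_reverse, List.head?_map]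

lemma w_invRev {k : ℕ} : ∀ (u : List (Letter k)), Reduced u → w (FreeGroup.invRev u) = - w u
  | [], _ => by simp [FreeGroup.invRev, w, pairSum, lastSign]
  | [x], _ => by
    rw [invRev_cons]
    show w ([] ++ [(x.1, !x.2)]) = _
    rw [List.nil_append, w_singleton, w_singleton, eSign_inv]
  | x :: y :: t, h => by
    have hxy : y ≠ (x.1, !x.2) := (List.isChain_cons_cons.mp h).1
    have ih := w_invRev (y :: t) (List.isChain_cons_cons.mp h).2
    rw [invRev_cons, w_append, ih, getLast?_invRev]
    rw [show (x :: y :: t) = [x] ++ (y :: t) from rfl, w_append]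
    simp only [List.head?_cons, Option.map_some, List.getLast?_singleton, jOpt, w_singleton]
    have key := pv_inv x y hxy
    rw [eSign_inv, eSign_inv] at *
    linarith

lemma reduced_reduce {k : ℕ} (L : List (Letter k)) : Reduced (FreeGroup.reduce L) := by
  induction L with
  | nil => exact List.isChain_nil
  | cons x L ih =>
    rw [FreeGroup.reduce.cons]
    cases h : FreeGroup.reduce L with
    | nil => exact List.isChain_singleton _
    | cons hd tl =>
      rw [h] at ih
      dsimp only
      split_ifs with hc
      · exact (List.isChain_cons.mp ih).2
      · refine List.isChain_cons_cons.mpr ⟨?_, ih⟩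
        intro he
        exact hc ⟨by rw [he], by rw [he]; simp⟩

lemma reduce_of_reduced {k : ℕ} : ∀ (L : List (Letter k)), Reduced L → FreeGroup.reduce L = L := by
  intro L h
  induction L with
  | nil => rfl
  | cons x L ih =>
    rw [FreeGroup.reduce.cons, ih (List.isChain_cons.mp h).2]
    cases L with
    | nil => rfl
    | cons y t =>
      dsimp only
      rw [if_neg]
      rintro ⟨h1, h2⟩
      exact (List.isChain_cons_cons.mp h).1 (Prod.ext h1.symm (by rw [h2]; simp))

lemma reduce_cancel {k : ℕ} (p q : List (Letter k)) (x : Letter k) :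
    FreeGroup.reduce (p ++ x :: (x.1, !x.2) :: q) = FreeGroup.reduce (p ++ q) :=
  FreeGroup.reduce.Step.eq (@FreeGroup.Red.Step.not _ p q x.1 x.2)

lemma decomp_aux {k : ℕ} (n : ℕ) : ∀ u v : List (Letter k), u.length ≤ n →
    Reduced u → Reduced v →
    ∃ a c b, u = a ++ c ∧ v = FreeGroup.invRev c ++ b ∧
      FreeGroup.reduce (u ++ v) = a ++ b ∧ Reduced (a ++ b) := by
  induction n with
  | zero =>
    intro u v hlen _ hv
    rw [List.length_eq_zero_iff.mp (Nat.le_zero.mp hlen)]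
    exact ⟨[], [], v, rfl, by simp [FreeGroup.invRev], reduce_of_reduced v hv, hv⟩
  | succ n ih =>
    intro u v hlen hu hv
    rcases List.eq_nil_or_concat' u with rfl | ⟨u', x, rfl⟩
    · exact ⟨[], [], v, rfl, by simp [FreeGroup.invRev], reduce_of_reduced v hv, hv⟩
    · cases v with
      | nil =>
        refine ⟨u' ++ [x], [], [], by simp, by simp [FreeGroup.invRev], ?_, by simpa using hu⟩
        rw [List.append_nil]
        exact reduce_of_reduced _ hu
      | cons y v' =>
        by_cases hc : y = (x.1, !x.2)
        · subst hc
          have hu' : Reduced u' := (List.isChain_append.mp hu).1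
          have hv' : Reduced v' := (List.isChain_cons.mp hv).2
          have hlen' : u'.length ≤ n := by
            rw [List.length_append] at hlen; simp at hlen; omega
          obtain ⟨a, c, b, h1, h2, h3, h4⟩ := ih u' v' hlen' hu' hv'
          refine ⟨a, c ++ [x], b, by rw [h1, List.append_assoc], ?_, ?_, h4⟩
          · have : FreeGroup.invRev (c ++ [x]) = (x.1, !x.2) :: FreeGroup.invRev c := by
              simp [FreeGroup.invRev]
            rw [this, h2]
            rfl
          · have e1 : (u' ++ [x]) ++ ((x.1, !x.2) :: v') = u' ++ x :: (x.1, !x.2) :: v' := by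
              simp
            rw [e1, reduce_cancel, h3]
        · refine ⟨u' ++ [x], [], y :: v', by simp, by simp [FreeGroup.invRev], ?_, ?_⟩
          · apply reduce_of_reduced
            unfold Reduced
            refine List.isChain_append.mpr ?_
            refine ⟨hu, hv, ?_⟩
            intro p hp q hq
            rw [List.getLast?_append_of_ne_nil u' (by simp)] at hp
            simp at hp hq
            rw [← hp, ← hq]
            exact hc
          · unfold Reduced
            refine List.isChain_append.mpr ?_
            refine ⟨hu, hv, ?_⟩
            intro p hp q hq
            rw [List.getLast?_append_of_ne_nil u' (by simp)] at hp
            simp at hp hq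
            rw [← hp, ← hq]
            exact hc

lemma decomp {k : ℕ} (u v : List (Letter k)) (hu : Reduced u) (hv : Reduced v) :
    ∃ a c b, u = a ++ c ∧ v = FreeGroup.invRev c ++ b ∧
      FreeGroup.reduce (u ++ v) = a ++ b ∧ Reduced (a ++ b) :=
  decomp_aux u.length u v le_rfl hu hv

lemma junction {k : ℕ} {l₁ l₂ : List (Letter k)} (h : Reduced (l₁ ++ l₂)) {x y : Letter k}
    (hx : l₁.getLast? = some x) (hy : l₂.head? = some y) : y ≠ (x.1, !x.2) :=
  (List.isChain_append.mp h).2.2 x hx y hy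

lemma w_reduce_append {k : ℕ} (u v : List (Letter k)) (hu : Reduced u) (hv : Reduced v) :
    w u + w v - 1/2 ≤ w (FreeGroup.reduce (u ++ v)) := by
  obtain ⟨a, c, b, h1, h2, h3, h4⟩ := decomp u v hu hv
  subst h1; subst h2
  rw [h3, w_append a b, w_append a c, w_append _ b]
  have hc : Reduced c := (List.isChain_append.mp hu).2.1
  rw [w_invRev c hc]
  have goal2 : jOpt a.getLast? c.head? + jOpt (FreeGroup.invRev c).getLast? b.head?
      - jOpt a.getLast? b.head? ≤ 1/2 → w a + w c + jOpt a.getLast? c.head? +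
        (-w c + w b + jOpt (FreeGroup.invRev c).getLast? b.head?) - 1/2
        ≤ w a + w b + jOpt a.getLast? b.head? := by intro hh; linarith
  apply goal2
  cases c with
  | nil =>
    simp only [FreeGroup.invRev, List.map_nil, List.reverse_nil, List.head?_nil,
      List.getLast?_nil, jOpt_none_right, jOpt_none_left]
    have := jOpt_ge a.getLast? b.head?
    linarith
  | cons y c' =>
    have hlast : (FreeGroup.invRev (y :: c')).getLast? = some (y.1, !y.2) := by
      rw [getLast?_invRev]; rfl
    rw [hlast]
    cases ha : a.getLast? with
    | none =>
      simp only [jOpt_none_left]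
      have := jOpt_le (some (y.1, !y.2)) b.head?
      linarith
    | some x =>
      cases hb : b.head? with
      | none =>
        simp only [jOpt_none_right, List.head?_cons]
        have := jOpt_le (some x) (some y)
        linarith
      | some z =>
        have hxy : y ≠ (x.1, !x.2) := junction hu ha rfl
        have hzy' : z ≠ ((y.1, !y.2).1, !(y.1, !y.2).2) := junction hv hlast hb
        have hzy : z ≠ y := by simpa using hzy'
        have hxz : z ≠ (x.1, !x.2) := junction h4 ha hb
        have := key3 x y z hxy hzy hxz
        simp only [jOpt, List.head?_cons]
        linarith

lemma w_half {k : ℕ} (u : List (Letter k)) (h : 0 < w u) : 1/2 ≤ w u := by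
  rcases hl : u.getLast? with _ | x
  · have h0 : lastSign u = 0 := by unfold lastSign; rw [hl]
    rw [w, h0] at h ⊢
    have h1 : (0:ℤ) < pairSum u := by exact_mod_cast (by simpa using h)
    have h2 : (1:ℚ) ≤ pairSum u := by exact_mod_cast h1
    linarith
  · have h0 : lastSign u = eSign x := lastSign_eq_some hl
    rw [w, h0] at h ⊢
    unfold eSign at h ⊢
    split_ifs at h ⊢ with hx
    · have h1 : (-1:ℚ) < pairSum u := by linarith
      have h2 : (-1:ℤ) < pairSum u := by exact_mod_cast h1
      have h3 : (0:ℤ) ≤ pairSum u := by omega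
      have h4 : (0:ℚ) ≤ pairSum u := by exact_mod_cast h3
      linarith
    · have h1 : (0:ℚ) < pairSum u := by linarith
      have h2 : (0:ℤ) < pairSum u := by exact_mod_cast h1
      have h3 : (1:ℚ) ≤ pairSum u := by exact_mod_cast h2
      linarith

lemma w_ne_zero {k : ℕ} (u : List (Letter k)) (hne : u ≠ []) : w u ≠ 0 := by
  rcases hl : u.getLast? with _ | x
  · exact absurd (List.getLast?_eq_none_iff.mp hl) hne
  · have h0 : lastSign u = eSign x := lastSign_eq_some hl
    rw [w, h0]
    unfold eSign
    split_ifs with hx <;> intro h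
    · have h1 : (2 * pairSum u : ℚ) = -1 := by linarith
      have h2 : (2 * pairSum u : ℤ) = -1 := by exact_mod_cast h1
      omega
    · have h1 : (2 * pairSum u : ℚ) = 1 := by linarith
      have h2 : (2 * pairSum u : ℤ) = 1 := by exact_mod_cast h1
      omega

lemma W_half {k : ℕ} (g : FreeGroup (Fin k)) (h : 0 < W g) : 1/2 ≤ W g := w_half _ h

lemma reduced_toWord' {k : ℕ} (g : FreeGroup (Fin k)) : Reduced g.toWord := by
  rw [← FreeGroup.reduce_toWord g]
  exact reduced_reduce _

lemma toWord_mul' {k : ℕ} (g h : FreeGroup (Fin k)) :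
    (g * h).toWord = FreeGroup.reduce (g.toWord ++ h.toWord) := by
  conv_lhs => rw [← FreeGroup.mk_toWord (x := g), ← FreeGroup.mk_toWord (x := h)]
  rw [FreeGroup.mul_mk, FreeGroup.toWord_mk]

lemma W_mul_ge {k : ℕ} (g h : FreeGroup (Fin k)) : W g + W h - 1/2 ≤ W (g * h) := by
  unfold W
  rw [toWord_mul']
  exact w_reduce_append _ _ (reduced_toWord' g) (reduced_toWord' h)

lemma W_inv {k : ℕ} (g : FreeGroup (Fin k)) : W g⁻¹ = - W g := by
  unfold W
  rw [FreeGroup.toWord_inv]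
  exact w_invRev _ (reduced_toWord' g)

theorem stmt13 (k : ℕ) (hk : 2 ≤ k) :
    (∀ f g h : FreeGroup (Fin k), 0 < W (h⁻¹ * g) → 0 < W ((f * h)⁻¹ * (f * g))) ∧
    (∀ f g h : FreeGroup (Fin k),
      0 < W (g⁻¹ * f) → 0 < W (h⁻¹ * g) → 0 < W (h⁻¹ * f)) ∧
    (∀ g h : FreeGroup (Fin k), g ≠ h →
      Xor' (0 < W (h⁻¹ * g)) (0 < W (g⁻¹ * h))) := by
  refine ⟨?_, ?_, ?_⟩
  · intro f g h hw
    have e : (f * h)⁻¹ * (f * g) = h⁻¹ * g := by group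
    rwa [e]
  · intro f g h h1 h2
    have e : h⁻¹ * f = (h⁻¹ * g) * (g⁻¹ * f) := by group
    rw [e]
    have k1 := W_mul_ge (h⁻¹ * g) (g⁻¹ * f)
    have k2 := W_half _ h1
    have k3 := W_half _ h2
    linarith
  · intro g h hgh
    have hx1 : h⁻¹ * g ≠ 1 := fun he => hgh (inv_mul_eq_one.mp he).symm
    have e2 : g⁻¹ * h = (h⁻¹ * g)⁻¹ := by group
    rw [e2, W_inv]
    have hne : W (h⁻¹ * g) ≠ 0 :=
      w_ne_zero _ fun hnil => hx1 (FreeGroup.toWord_eq_nil_iff.mp hnil)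
    rcases hne.lt_or_gt with hlt | hgt
    · exact Or.inr ⟨by linarith, by linarith⟩
    · exact Or.inl ⟨hgt, by linarith⟩
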